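/- Let n ≥ 2, θ ∈ ℝ and ν > 0. Let A_1, …, A_n be independent real random variables, each distributed N(θ, ν/2). For t = 1, …, n−1 let τ_t = arctan(t^{−1/2}), and apply successively, for t = 1, …, n−1, the update (A_1, A_{t+1}) ↦ (A_1 cos τ_t + A_{t+1} sin τ_t, −A_1 sin τ_t + A_{t+1} cos τ_t). Then the resulting random variables A'_1, …, A'_n are independent, with A'_1 distributed N(√n · θ, ν/2) and A'_j distributed N(0, ν/2) for every j = 2, …, n. -/

import Mathlib

open MeasureTheory ProbabilityTheory Real

/-- The rotation `g_τ^{(j,k)}` acting on a vector of amplitudes (0-based indices):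
`(v j, v k) ↦ (v j cos τ + v k sin τ, -v j sin τ + v k cos τ)`. -/
noncomputable def rotStep (τ : ℝ) (j k : ℕ) (v : ℕ → ℝ) : ℕ → ℝ := fun i =>
  if i = j then v j * Real.cos τ + v k * Real.sin τ
  else if i = k then -v j * Real.sin τ + v k * Real.cos τ
  else v i

/-- The transformation `G₁ = g_{τ_{n-1}}^{(1,n)} ⋯ g_{τ_1}^{(1,2)}` with
`τ_t = arctan t^{-1/2}`, applied in the order `t = 1, …, n-1` (0-based indices:
step `t` rotates the pair of indices `(0, t)`). -/
noncomputable def G1 (n : ℕ) (v : ℕ → ℝ) : ℕ → ℝ :=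
  (List.range (n - 1)).foldl
    (fun (w : ℕ → ℝ) (t : ℕ) => rotStep (Real.arctan (1 / Real.sqrt ((t : ℝ) + 1))) 0 (t + 1) w) v

open Set
open scoped ENNReal NNReal

namespace Stmt3

lemma withDensity_prod_withDensity {α β : Type*} [MeasurableSpace α] [MeasurableSpace β]
    (μ : Measure α) (ν : Measure β) [SigmaFinite μ] [SigmaFinite ν]
    {f : α → ℝ≥0∞} {g : β → ℝ≥0∞} (hf : Measurable f) (hg : Measurable g)
    [SigmaFinite (μ.withDensity f)] [SigmaFinite (ν.withDensity g)] :
    (μ.withDensity f).prod (ν.withDensity g)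
      = (μ.prod ν).withDensity (fun p => f p.1 * g p.2) := by
  refine Measure.prod_eq fun s t hs ht => ?_
  rw [withDensity_apply _ (hs.prod ht), ← Measure.prod_restrict,
    lintegral_prod_mul hf.aemeasurable hg.aemeasurable,
    withDensity_apply _ hs, withDensity_apply _ ht]

lemma map_withDensity_equiv {α β : Type*} [MeasurableSpace α] [MeasurableSpace β]
    {μ : Measure α} {ν : Measure β} (e : α ≃ᵐ β) (he : MeasurePreserving e μ ν)
    {f : α → ℝ≥0∞} (hf : Measurable f) :
    (μ.withDensity f).map e = ν.withDensity (f ∘ e.symm) := by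
  ext s hs
  rw [Measure.map_apply e.measurable hs, withDensity_apply _ (e.measurable hs),
    withDensity_apply _ hs]
  rw [← he.map_eq, MeasureTheory.setLIntegral_map hs (hf.comp e.symm.measurable) e.measurable]
  simp only [Function.comp_apply, MeasurableEquiv.symm_apply_apply]

/-- Rotation of the plane as a measurable equivalence. -/
noncomputable def rotEquiv (c s : ℝ) (h : c ^ 2 + s ^ 2 = 1) : (ℝ × ℝ) ≃ᵐ (ℝ × ℝ) where
  toFun := fun p => (c * p.1 + s * p.2, -s * p.1 + c * p.2)
  invFun := fun p => (c * p.1 - s * p.2, s * p.1 + c * p.2)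
  left_inv := by
    intro p
    ext
    · simp only; linear_combination p.1 * h
    · simp only; linear_combination p.2 * h
  right_inv := by
    intro p
    ext
    · simp only; linear_combination p.1 * h
    · simp only; linear_combination p.2 * h
  measurable_toFun :=
    ((measurable_fst.const_mul c).add (measurable_snd.const_mul s)).prodMk
      ((measurable_fst.const_mul (-s)).add (measurable_snd.const_mul c))
  measurable_invFun := by
    exact ((measurable_fst.const_mul c).sub (measurable_snd.const_mul s)).prodMk
      ((measurable_fst.const_mul s).add (measurable_snd.const_mul c))

lemma rotEquiv_measurePreserving (c s : ℝ) (h : c ^ 2 + s ^ 2 = 1) :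
    MeasurePreserving (rotEquiv c s h)
      ((volume : Measure ℝ).prod volume) ((volume : Measure ℝ).prod volume) := by
  have hw : ‖(⟨c, -s⟩ : ℂ)‖ = 1 := by
    rw [Complex.norm_def, Complex.normSq_mk]
    rw [show c * c + -s * -s = 1 by linear_combination h]
    exact Real.sqrt_one
  set w : Circle := ⟨⟨c, -s⟩, mem_sphere_zero_iff_norm.mpr hw⟩ with hwdef
  have h1 : MeasurePreserving (rotation w) (volume : Measure ℂ) volume :=
    (rotation w).measurePreserving
  have h2 := Complex.volume_preserving_equiv_real_prod
  have hcomp := h2.comp (h1.comp h2.symm)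
  have hfun : (Complex.measurableEquivRealProd ∘ (rotation w) ∘
      Complex.measurableEquivRealProd.symm) = rotEquiv c s h := by
    funext p
    have : (rotEquiv c s h) p = (c * p.1 + s * p.2, -s * p.1 + c * p.2) := rfl
    rw [this]
    simp only [Function.comp_apply, Complex.measurableEquivRealProd_symm_apply,
      rotation_apply, Complex.measurableEquivRealProd_apply]
    apply Prod.ext <;>
      simp [hwdef, Complex.mul_re, Complex.mul_im] <;> ring
  rw [hfun] at hcomp
  exact hcomp

lemma gaussianPDFReal_rot {μ₁ μ₂ : ℝ} {v : ℝ≥0} (hv : v ≠ 0) {c s : ℝ}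
    (h : c ^ 2 + s ^ 2 = 1) (u w : ℝ) :
    gaussianPDFReal μ₁ v (c * u - s * w) * gaussianPDFReal μ₂ v (s * u + c * w)
      = gaussianPDFReal (c * μ₁ + s * μ₂) v u * gaussianPDFReal (-s * μ₁ + c * μ₂) v w := by
  have hv' : (0 : ℝ) < (v : ℝ) := by positivity
  simp only [gaussianPDFReal]
  rw [mul_mul_mul_comm, ← Real.exp_add, mul_mul_mul_comm, ← Real.exp_add]
  congr 1
  have key : (c * u - s * w - μ₁) ^ 2 + (s * u + c * w - μ₂) ^ 2
      = (u - (c * μ₁ + s * μ₂)) ^ 2 + (w - (-s * μ₁ + c * μ₂)) ^ 2 := by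
    linear_combination (u ^ 2 + w ^ 2 - μ₁ ^ 2 - μ₂ ^ 2) * h
  rw [← add_div, ← add_div]
  have hnum : (-(c * u - s * w - μ₁) ^ 2 + -(s * u + c * w - μ₂) ^ 2)
      = (-(u - (c * μ₁ + s * μ₂)) ^ 2 + -(w - (-s * μ₁ + c * μ₂)) ^ 2) := by linarith [key]
  rw [hnum]

lemma rot2 (μ₁ μ₂ : ℝ) {v : ℝ≥0} (hv : v ≠ 0) {c s : ℝ} (h : c ^ 2 + s ^ 2 = 1) :
    ((gaussianReal μ₁ v).prod (gaussianReal μ₂ v)).map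
        (fun p : ℝ × ℝ => (c * p.1 + s * p.2, -s * p.1 + c * p.2))
      = (gaussianReal (c * μ₁ + s * μ₂) v).prod (gaussianReal (-s * μ₁ + c * μ₂) v) := by
  have inst : ∀ m : ℝ, SigmaFinite ((volume : Measure ℝ).withDensity (gaussianPDF m v)) := by
    intro m
    rw [← gaussianReal_of_var_ne_zero m hv]
    infer_instance
  haveI := inst μ₁; haveI := inst μ₂
  haveI := inst (c * μ₁ + s * μ₂); haveI := inst (-s * μ₁ + c * μ₂)
  rw [gaussianReal_of_var_ne_zero _ hv, gaussianReal_of_var_ne_zero _ hv,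
    gaussianReal_of_var_ne_zero _ hv, gaussianReal_of_var_ne_zero _ hv,
    withDensity_prod_withDensity _ _ (measurable_gaussianPDF _ _) (measurable_gaussianPDF _ _),
    withDensity_prod_withDensity _ _ (measurable_gaussianPDF _ _) (measurable_gaussianPDF _ _)]
  have hcoe : (fun p : ℝ × ℝ => (c * p.1 + s * p.2, -s * p.1 + c * p.2))
      = ⇑(rotEquiv c s h) := rfl
  rw [hcoe, map_withDensity_equiv (f := fun p : ℝ × ℝ => gaussianPDF μ₁ v p.1 * gaussianPDF μ₂ v p.2)
    _ (rotEquiv_measurePreserving c s h)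
    (((measurable_gaussianPDF _ _).comp measurable_fst).mul
      ((measurable_gaussianPDF _ _).comp measurable_snd))]
  congr 1
  funext p
  show gaussianPDF μ₁ v (c * p.1 - s * p.2) * gaussianPDF μ₂ v (s * p.1 + c * p.2) = _
  simp only [gaussianPDF]
  rw [← ENNReal.ofReal_mul (gaussianPDFReal_nonneg _ _ _),
    ← ENNReal.ofReal_mul (gaussianPDFReal_nonneg _ _ _), gaussianPDFReal_rot hv h]

variable {n : ℕ}

/-- The pair of distinguished coordinates, as a measurable equivalence. -/
noncomputable def pairEquiv (j k : Fin n) (hjk : j ≠ k) :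
    ({i : Fin n // i = j ∨ i = k} → ℝ) ≃ᵐ (ℝ × ℝ) where
  toFun v := (v ⟨j, Or.inl rfl⟩, v ⟨k, Or.inr rfl⟩)
  invFun p := fun i => if (i : Fin n) = j then p.1 else p.2
  left_inv v := by
    funext i
    rcases i with ⟨i, hi | hi⟩ <;> subst hi
    · simp
    · simp [hjk.symm]
  right_inv p := by
    show ((if (j : Fin n) = j then p.1 else p.2), (if (k : Fin n) = j then p.1 else p.2)) = p
    rw [if_pos rfl, if_neg (Ne.symm hjk)]
  measurable_toFun := Measurable.prodMk (measurable_pi_apply _) (measurable_pi_apply _)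
  measurable_invFun := by
    show Measurable fun (p : ℝ × ℝ) (i : {i : Fin n // i = j ∨ i = k}) =>
      if (i : Fin n) = j then p.1 else p.2
    refine measurable_pi_lambda _ fun i => ?_
    by_cases h : (i : Fin n) = j
    · simpa [h] using measurable_fst
    · simpa [h] using measurable_snd

lemma pairEquiv_measurePreserving (μ : Fin n → Measure ℝ) [∀ i, IsProbabilityMeasure (μ i)]
    {j k : Fin n} (hjk : j ≠ k) :
    MeasurePreserving (pairEquiv j k hjk)
      (Measure.pi fun i : {i : Fin n // i = j ∨ i = k} => μ i) ((μ j).prod (μ k)) := by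
  refine ⟨(pairEquiv j k hjk).measurable, ?_⟩
  refine (Measure.prod_eq fun s t hs ht => ?_).symm
  rw [Measure.map_apply (pairEquiv j k hjk).measurable (hs.prod ht)]
  have hpre : (pairEquiv j k hjk) ⁻¹' (s ×ˢ t)
      = Set.pi Set.univ (fun i : {i : Fin n // i = j ∨ i = k} =>
          if (i : Fin n) = j then s else t) := by
    ext v
    simp only [Set.mem_preimage, Set.mem_prod, Set.mem_univ_pi]
    rw [show (pairEquiv j k hjk) v = (v ⟨j, Or.inl rfl⟩, v ⟨k, Or.inr rfl⟩) from rfl]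
    constructor
    · rintro ⟨h1, h2⟩ ⟨i, hi | hi⟩ <;> subst hi
      · simpa using h1
      · simpa [hjk.symm] using h2
    · intro hv
      refine ⟨?_, ?_⟩
      · simpa using hv ⟨j, Or.inl rfl⟩
      · simpa [hjk.symm] using hv ⟨k, Or.inr rfl⟩
  rw [hpre, Measure.pi_pi]
  have huniv : (Finset.univ : Finset {i : Fin n // i = j ∨ i = k})
      = {⟨j, Or.inl rfl⟩, ⟨k, Or.inr rfl⟩} := by
    ext ⟨i, hi | hi⟩ <;> subst hi <;> simp
  rw [huniv, Finset.prod_insert (by simp [Subtype.ext_iff, hjk]), Finset.prod_singleton]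
  simp [hjk.symm]

lemma map_pi_pair (μ : Fin n → Measure ℝ) [∀ i, IsProbabilityMeasure (μ i)]
    {j k : Fin n} (hjk : j ≠ k) {f g : ℝ → ℝ → ℝ}
    (hfg : Measurable (fun p : ℝ × ℝ => (f p.1 p.2, g p.1 p.2)))
    {ν₁ ν₂ : Measure ℝ} [IsProbabilityMeasure ν₁] [IsProbabilityMeasure ν₂]
    (h2 : ((μ j).prod (μ k)).map (fun p : ℝ × ℝ => (f p.1 p.2, g p.1 p.2)) = ν₁.prod ν₂) :
    (Measure.pi μ).map
        (fun v i => if i = j then f (v j) (v k) else if i = k then g (v j) (v k) else v i)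
      = Measure.pi (fun i => if i = j then ν₁ else if i = k then ν₂ else μ i) := by
  classical
  set ν : Fin n → Measure ℝ := fun i => if i = j then ν₁ else if i = k then ν₂ else μ i with hν
  haveI : ∀ i, IsProbabilityMeasure (ν i) := by
    intro i
    simp only [hν]
    split
    · infer_instance
    · split <;> infer_instance
  set P : Fin n → Prop := fun i => i = j ∨ i = k with hP
  let e := MeasurableEquiv.piEquivPiSubtypeProd (fun _ : Fin n => ℝ) P
  let e₂ := pairEquiv j k hjk
  let R : ℝ × ℝ → ℝ × ℝ := fun p => (f p.1 p.2, g p.1 p.2)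
  let T₂ : ({i // P i} → ℝ) → ({i // P i} → ℝ) := fun v => e₂.symm (R (e₂ v))
  have hT₂meas : Measurable T₂ := e₂.symm.measurable.comp (hfg.comp e₂.measurable)
  have hfuneq : (fun (v : Fin n → ℝ) i =>
        if i = j then f (v j) (v k) else if i = k then g (v j) (v k) else v i)
      = e.symm ∘ (Prod.map T₂ id) ∘ e := by
    funext v
    funext i
    show _ = e.symm (T₂ (fun i' : {i // P i} => v i'), fun i' : {i // ¬ P i} => v i') i
    have hsymm : ∀ (u : {i // P i} → ℝ) (w : {i // ¬ P i} → ℝ) (i : Fin n),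
        e.symm (u, w) i = if h : P i then u ⟨i, h⟩ else w ⟨i, h⟩ := fun u w i => rfl
    rw [hsymm]
    have hT₂ : ∀ (u : {i // P i} → ℝ) (i' : {i // P i}),
        T₂ u i' = if (i' : Fin n) = j then f (u ⟨j, Or.inl rfl⟩) (u ⟨k, Or.inr rfl⟩)
          else g (u ⟨j, Or.inl rfl⟩) (u ⟨k, Or.inr rfl⟩) := fun u i' => rfl
    by_cases hij : i = j
    · subst hij
      rw [if_pos rfl, dif_pos (Or.inl rfl), hT₂, if_pos rfl]
    · by_cases hik : i = k
      · subst hik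
        rw [if_neg hij, if_pos rfl, dif_pos (Or.inr rfl), hT₂, if_neg hij]
      · rw [if_neg hij, if_neg hik, dif_neg (by simp [hP, hij, hik])]
  rw [hfuneq]
  have hmeas_e := (MeasureTheory.measurePreserving_piEquivPiSubtypeProd μ P)
  have hPM : Measurable (Prod.map T₂ (id : ({i // ¬ P i} → ℝ) → ({i // ¬ P i} → ℝ))) :=
    hT₂meas.prodMap measurable_id
  have step3 : (Measure.pi fun i : {i // P i} => μ i).map T₂
      = Measure.pi fun i : {i // P i} => ν i := by
    have hμP := pairEquiv_measurePreserving μ hjk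
    have hνP := pairEquiv_measurePreserving ν hjk
    have hT₂eq : T₂ = ⇑e₂.symm ∘ R ∘ ⇑e₂ := rfl
    have hRmeas : Measurable R := hfg
    rw [hT₂eq, ← Measure.map_map e₂.symm.measurable (hRmeas.comp e₂.measurable),
      ← Measure.map_map hRmeas e₂.measurable,
      (hμP.map_eq : (Measure.pi fun i : {i // P i} => μ i).map ⇑e₂ = _),
      (h2 : ((μ j).prod (μ k)).map R = _)]
    have hν₁ : ν j = ν₁ := by simp [hν]
    have hν₂ : ν k = ν₂ := by simp [hν, Ne.symm hjk]
    rw [← hν₁, ← hν₂,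
      ← (hνP.map_eq : (Measure.pi fun i : {i // P i} => ν i).map ⇑e₂ = _),
      Measure.map_map e₂.symm.measurable e₂.measurable]
    have hid : ⇑e₂.symm ∘ ⇑e₂ = id := by
      funext x; exact e₂.symm_apply_apply x
    rw [hid, Measure.map_id]
  have hνPc : (Measure.pi fun i : {i // ¬ P i} => μ i)
      = Measure.pi fun i : {i // ¬ P i} => ν i := by
    congr 1
    funext i
    have h1 : ¬ (i : Fin n) = j := fun h => i.2 (Or.inl h)
    have h2' : ¬ (i : Fin n) = k := fun h => i.2 (Or.inr h)
    simp [hν, h1, h2']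
  calc Measure.map (⇑e.symm ∘ Prod.map T₂ id ∘ ⇑e) (Measure.pi μ)
      = ((Measure.pi μ).map e).map (⇑e.symm ∘ Prod.map T₂ id) := by
        rw [Measure.map_map (e.symm.measurable.comp hPM) e.measurable]
        rfl
    _ = (((Measure.pi fun i : {i // P i} => μ i).prod
          (Measure.pi fun i : {i // ¬ P i} => μ i)).map (Prod.map T₂ id)).map e.symm := by
        rw [(hmeas_e.map_eq : (Measure.pi μ).map ⇑e = _),
          Measure.map_map e.symm.measurable hPM]
    _ = (((Measure.pi fun i : {i // P i} => μ i).map T₂).prod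
          (Measure.pi fun i : {i // ¬ P i} => μ i)).map e.symm := by
        rw [← Measure.map_prod_map _ _ hT₂meas measurable_id, Measure.map_id]
    _ = (((Measure.pi fun i : {i // P i} => ν i)).prod
          (Measure.pi fun i : {i // ¬ P i} => ν i)).map e.symm := by
        rw [step3, hνPc]
    _ = Measure.pi ν :=
        ((MeasureTheory.measurePreserving_piEquivPiSubtypeProd ν P).symm
          (MeasurableEquiv.piEquivPiSubtypeProd (fun _ : Fin n => ℝ) P)).map_eq

lemma iIndepFun_iff_pi_map {Ω : Type} [MeasureSpace Ω] [IsProbabilityMeasure (ℙ : Measure Ω)]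
    (X : Fin n → Ω → ℝ) (hX : ∀ i, Measurable (X i)) :
    iIndepFun X ℙ
      ↔ (ℙ : Measure Ω).map (fun ω i => X i ω)
          = Measure.pi (fun i => (ℙ : Measure Ω).map (X i)) := by
  have hjoint : Measurable (fun ω (i : Fin n) => X i ω) :=
    measurable_pi_lambda _ fun i => hX i
  constructor
  · intro h
    refine (Measure.pi_eq fun s hs => ?_).symm
    rw [Measure.map_apply hjoint (MeasurableSet.univ_pi hs)]
    have hpre : (fun ω (i : Fin n) => X i ω) ⁻¹' (Set.pi Set.univ s)
        = ⋂ i ∈ Finset.univ, X i ⁻¹' s i := by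
      ext ω
      simp [Set.mem_univ_pi]
    rw [hpre, h.measure_inter_preimage_eq_mul Finset.univ (fun i _ => hs i)]
    exact Finset.prod_congr rfl fun i _ => (Measure.map_apply (hX i) (hs i)).symm
  · intro h
    rw [iIndepFun_iff_measure_inter_preimage_eq_mul]
    intro S sets hsets
    classical
    set s' : Fin n → Set ℝ := fun i => if i ∈ S then sets i else Set.univ with hs'
    have hs'meas : ∀ i, MeasurableSet (s' i) := by
      intro i
      simp only [hs']
      split
      · exact hsets i ‹_›
      · exact MeasurableSet.univ
    have hpre : (⋂ i ∈ S, X i ⁻¹' sets i) = (fun ω (i : Fin n) => X i ω) ⁻¹' (Set.pi Set.univ s') := by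
      ext ω
      simp only [Set.mem_iInter, Set.mem_preimage, Set.mem_univ_pi, hs']
      constructor
      · intro hω i
        split
        · exact hω i ‹_›
        · exact Set.mem_univ _
      · intro hω i hi
        have := hω i
        rwa [if_pos hi] at this
    rw [hpre, ← Measure.map_apply hjoint (MeasurableSet.univ_pi hs'meas), h, Measure.pi_pi]
    have : ∀ i : Fin n, (ℙ : Measure Ω).map (X i) (s' i)
        = if i ∈ S then ℙ (X i ⁻¹' sets i) else 1 := by
      intro i
      simp only [hs']
      split
      · rw [Measure.map_apply (hX i) (hsets i ‹_›)]
      · haveI : IsProbabilityMeasure ((ℙ : Measure Ω).map (X i)) :=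
          Measure.isProbabilityMeasure_map (hX i).aemeasurable
        simp
    rw [Finset.prod_congr rfl fun i _ => this i]
    rw [Finset.prod_ite_mem Finset.univ S (fun i => ℙ (X i ⁻¹' sets i))]
    rw [Finset.univ_inter]

lemma map_eval_pi {μ : Fin n → Measure ℝ} [∀ i, IsProbabilityMeasure (μ i)] (i : Fin n) :
    (Measure.pi μ).map (fun v => v i) = μ i := by
  classical
  ext s hs
  rw [Measure.map_apply (measurable_pi_apply i) hs]
  have : (fun v : Fin n → ℝ => v i) ⁻¹' s
      = Set.pi Set.univ (fun j => if j = i then s else Set.univ) := by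
    ext v
    simp only [Set.mem_preimage, Set.mem_univ_pi]
    constructor
    · intro hv j
      split
      · subst ‹j = i›; exact hv
      · exact Set.mem_univ _
    · intro hv
      have := hv i
      rwa [if_pos rfl] at this
  rw [this, Measure.pi_pi]
  rw [Finset.prod_eq_single i (fun j _ hj => by simp [hj]) (by simp)]
  simp

/-- Partial composition of the first `k` rotation steps. -/
noncomputable def G1p (k : ℕ) (v : ℕ → ℝ) : ℕ → ℝ :=
  (List.range k).foldl
    (fun (w : ℕ → ℝ) (t : ℕ) => rotStep (Real.arctan (1 / Real.sqrt ((t : ℝ) + 1))) 0 (t + 1) w) v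

lemma G1p_zero (v : ℕ → ℝ) : G1p 0 v = v := rfl

lemma G1p_succ (k : ℕ) (v : ℕ → ℝ) :
    G1p (k + 1) v
      = rotStep (Real.arctan (1 / Real.sqrt ((k : ℝ) + 1))) 0 (k + 1) (G1p k v) := by
  rw [G1p, List.range_succ, List.foldl_append, List.foldl_cons, List.foldl_nil]
  rfl

lemma G1p_local {n : ℕ} : ∀ (k : ℕ), k < n → ∀ v w : ℕ → ℝ,
    (∀ j, j < n → v j = w j) → ∀ i, i < n → G1p k v i = G1p k w i := by
  intro k
  induction k with
  | zero => intro _ v w h i hi; exact h i hi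
  | succ k IH =>
    intro hk v w h i hi
    have hk' : k < n := by omega
    rw [G1p_succ, G1p_succ]
    simp only [rotStep]
    have h0 := IH hk' v w h 0 (by omega)
    have hk1 := IH hk' v w h (k + 1) hk
    have hii := IH hk' v w h i hi
    by_cases hi0 : i = 0
    · rw [if_pos hi0, if_pos hi0, h0, hk1]
    · rw [if_neg hi0, if_neg hi0]
      by_cases hik : i = k + 1
      · rw [if_pos hik, if_pos hik, h0, hk1]
      · rw [if_neg hik, if_neg hik, hii]

/-- Extend a `Fin n`-indexed vector by zero. -/
def extendFin (n : ℕ) (v : Fin n → ℝ) : ℕ → ℝ := fun j => if h : j < n then v ⟨j, h⟩ else 0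

lemma G1p_extend_measurable {n : ℕ} (k : ℕ) (i : ℕ) :
    Measurable (fun v : Fin n → ℝ => G1p k (extendFin n v) i) := by
  induction k generalizing i with
  | zero =>
    show Measurable (fun v : Fin n → ℝ => extendFin n v i)
    unfold extendFin
    split
    · exact measurable_pi_apply _
    · exact measurable_const
  | succ k IH =>
    simp only [G1p_succ, rotStep]
    by_cases hi0 : i = 0
    · simp only [if_pos hi0]
      exact ((IH 0).mul measurable_const).add ((IH (k + 1)).mul measurable_const)
    · by_cases hik : i = k + 1
      · simp only [if_neg hi0, if_pos hik]
        exact (((IH 0).neg).mul measurable_const).add ((IH (k + 1)).mul measurable_const)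
      · simp only [if_neg hi0, if_neg hik]
        exact IH i

lemma cos_sin_arctan_sqrt (k : ℕ) :
    Real.cos (Real.arctan (1 / Real.sqrt ((k : ℝ) + 1)))
        = Real.sqrt ((k : ℝ) + 1) / Real.sqrt ((k : ℝ) + 2)
      ∧ Real.sin (Real.arctan (1 / Real.sqrt ((k : ℝ) + 1)))
        = 1 / Real.sqrt ((k : ℝ) + 2) := by
  have ha : (0 : ℝ) < Real.sqrt ((k : ℝ) + 1) := Real.sqrt_pos.mpr (by positivity)
  have hb : (0 : ℝ) < Real.sqrt ((k : ℝ) + 2) := Real.sqrt_pos.mpr (by positivity)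
  have ha2 : Real.sqrt ((k : ℝ) + 1) ^ 2 = (k : ℝ) + 1 := Real.sq_sqrt (by positivity)
  have hx : 1 + (1 / Real.sqrt ((k : ℝ) + 1)) ^ 2 = ((k : ℝ) + 2) / ((k : ℝ) + 1) := by
    rw [div_pow, one_pow, ha2]
    field_simp
    ring
  have hsq : Real.sqrt (1 + (1 / Real.sqrt ((k : ℝ) + 1)) ^ 2)
      = Real.sqrt ((k : ℝ) + 2) / Real.sqrt ((k : ℝ) + 1) := by
    rw [hx, Real.sqrt_div (by positivity)]
  constructor
  · rw [Real.cos_arctan, hsq, one_div_div]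
  · rw [Real.sin_arctan, hsq]
    field_simp

lemma main_pi (n : ℕ) (hn : 2 ≤ n) (θ : ℝ) (v' : ℝ≥0) (hv' : v' ≠ 0) :
    ∀ k, k ≤ n - 1 →
      (Measure.pi fun _ : Fin n => gaussianReal θ v').map
          (fun v (i : Fin n) => G1p k (extendFin n v) i)
        = Measure.pi (fun i : Fin n =>
            gaussianReal (if (i : ℕ) = 0 then Real.sqrt ((k : ℝ) + 1) * θ
              else if (i : ℕ) ≤ k then 0 else θ) v') := by
  intro k
  induction k with
  | zero =>
    intro _
    have hfun : (fun v (i : Fin n) => G1p 0 (extendFin n v) i) = id := by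
      funext v i
      show extendFin n v i = v i
      simp [extendFin, i.isLt]
    rw [hfun, Measure.map_id]
    congr 1
    funext i
    by_cases h0 : (i : ℕ) = 0
    · norm_num [h0]
    · simp [h0, Nat.le_zero]
  | succ k IH =>
    intro hk1
    have hk : k ≤ n - 1 := by omega
    have hk1n : k + 1 < n := by omega
    obtain ⟨hc, hs⟩ := cos_sin_arctan_sqrt k
    have ha : (0 : ℝ) < Real.sqrt ((k : ℝ) + 1) := Real.sqrt_pos.mpr (by positivity)
    have hb : (0 : ℝ) < Real.sqrt ((k : ℝ) + 2) := Real.sqrt_pos.mpr (by positivity)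
    have ha2 : Real.sqrt ((k : ℝ) + 1) ^ 2 = (k : ℝ) + 1 := Real.sq_sqrt (by positivity)
    have hb2 : Real.sqrt ((k : ℝ) + 2) ^ 2 = (k : ℝ) + 2 := Real.sq_sqrt (by positivity)
    set τ := Real.arctan (1 / Real.sqrt ((k : ℝ) + 1)) with hτ
    set j₀ : Fin n := ⟨0, by omega⟩ with hj₀
    set k₁ : Fin n := ⟨k + 1, hk1n⟩ with hk₁
    have hjk : j₀ ≠ k₁ := by
      intro h
      have := congrArg Fin.val h
      simp [hj₀, hk₁] at this
    have hcs : Real.cos τ ^ 2 + Real.sin τ ^ 2 = 1 := Real.cos_sq_add_sin_sq τ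
    have hfuneq : (fun v (i : Fin n) => G1p (k + 1) (extendFin n v) i)
        = (fun (w : Fin n → ℝ) (i : Fin n) =>
              if i = j₀ then Real.cos τ * w j₀ + Real.sin τ * w k₁
              else if i = k₁ then -Real.sin τ * w j₀ + Real.cos τ * w k₁
              else w i)
            ∘ (fun v (i : Fin n) => G1p k (extendFin n v) i) := by
      funext v i
      show G1p (k + 1) (extendFin n v) ↑i = _
      rw [G1p_succ]
      simp only [Function.comp_apply, rotStep, ← hτ]
      by_cases hi0 : (i : ℕ) = 0
      · have hij : i = j₀ := Fin.ext hi0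
        rw [if_pos hi0, if_pos hij]
        show _ = Real.cos τ * G1p k (extendFin n v) ((j₀ : Fin n) : ℕ)
          + Real.sin τ * G1p k (extendFin n v) ((k₁ : Fin n) : ℕ)
        have h1 : ((j₀ : Fin n) : ℕ) = 0 := rfl
        have h2 : ((k₁ : Fin n) : ℕ) = k + 1 := rfl
        rw [h1, h2]
        ring
      · rw [if_neg hi0]
        have hij : i ≠ j₀ := fun h => hi0 (by rw [h])
        rw [if_neg hij]
        by_cases hik : (i : ℕ) = k + 1
        · have hik' : i = k₁ := Fin.ext hik
          rw [if_pos hik, if_pos hik']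
          show _ = -Real.sin τ * G1p k (extendFin n v) ((j₀ : Fin n) : ℕ)
            + Real.cos τ * G1p k (extendFin n v) ((k₁ : Fin n) : ℕ)
          have h1 : ((j₀ : Fin n) : ℕ) = 0 := rfl
          have h2 : ((k₁ : Fin n) : ℕ) = k + 1 := rfl
          rw [h1, h2]
          ring
        · have hik' : i ≠ k₁ := fun h => hik (by rw [h])
          rw [if_neg hik, if_neg hik']
    have hP2meas : Measurable (fun (w : Fin n → ℝ) (i : Fin n) =>
        if i = j₀ then Real.cos τ * w j₀ + Real.sin τ * w k₁
        else if i = k₁ then -Real.sin τ * w j₀ + Real.cos τ * w k₁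
        else w i) := by
      refine measurable_pi_lambda _ fun i => ?_
      by_cases h1 : i = j₀
      · simp only [if_pos h1]
        exact ((measurable_pi_apply _).const_mul _).add ((measurable_pi_apply _).const_mul _)
      · by_cases h2 : i = k₁
        · simp only [if_neg h1, if_pos h2]
          exact ((measurable_pi_apply _).const_mul _).add ((measurable_pi_apply _).const_mul _)
        · simp only [if_neg h1, if_neg h2]
          exact measurable_pi_apply _
    have hGmeas : Measurable (fun v (i : Fin n) => G1p k (extendFin n v) i) :=
      measurable_pi_lambda _ fun i => G1p_extend_measurable k i
    rw [hfuneq, ← Measure.map_map hP2meas hGmeas, IH hk]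
    have hfg : Measurable (fun p : ℝ × ℝ =>
        (Real.cos τ * p.1 + Real.sin τ * p.2, -Real.sin τ * p.1 + Real.cos τ * p.2)) :=
      ((measurable_fst.const_mul _).add (measurable_snd.const_mul _)).prodMk
        ((measurable_fst.const_mul _).add (measurable_snd.const_mul _))
    have hm0 : (if ((j₀ : Fin n) : ℕ) = 0 then Real.sqrt ((k : ℝ) + 1) * θ
        else if ((j₀ : Fin n) : ℕ) ≤ k then 0 else θ) = Real.sqrt ((k : ℝ) + 1) * θ := by
      rw [if_pos rfl]
    have hmk1 : (if ((k₁ : Fin n) : ℕ) = 0 then Real.sqrt ((k : ℝ) + 1) * θ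
        else if ((k₁ : Fin n) : ℕ) ≤ k then 0 else θ) = θ := by
      have h2 : ((k₁ : Fin n) : ℕ) = k + 1 := rfl
      rw [h2, if_neg (by omega), if_neg (by omega)]
    have h2' : ((gaussianReal (if ((j₀ : Fin n) : ℕ) = 0 then Real.sqrt ((k : ℝ) + 1) * θ
          else if ((j₀ : Fin n) : ℕ) ≤ k then 0 else θ) v').prod
        (gaussianReal (if ((k₁ : Fin n) : ℕ) = 0 then Real.sqrt ((k : ℝ) + 1) * θ
          else if ((k₁ : Fin n) : ℕ) ≤ k then 0 else θ) v')).map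
          (fun p : ℝ × ℝ =>
            (Real.cos τ * p.1 + Real.sin τ * p.2, -Real.sin τ * p.1 + Real.cos τ * p.2))
        = (gaussianReal (Real.cos τ * (Real.sqrt ((k : ℝ) + 1) * θ) + Real.sin τ * θ) v').prod
            (gaussianReal (-Real.sin τ * (Real.sqrt ((k : ℝ) + 1) * θ) + Real.cos τ * θ) v') := by
      rw [hm0, hmk1]
      exact rot2 _ _ hv' hcs
    have happ := map_pi_pair
      (μ := fun i : Fin n => gaussianReal (if (i : ℕ) = 0 then Real.sqrt ((k : ℝ) + 1) * θ
        else if (i : ℕ) ≤ k then 0 else θ) v') hjk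
      (f := fun x y => Real.cos τ * x + Real.sin τ * y)
      (g := fun x y => -Real.sin τ * x + Real.cos τ * y) hfg h2'
    refine Eq.trans happ ?_
    congr 1
    funext i
    have mean1 : Real.cos τ * (Real.sqrt ((k : ℝ) + 1) * θ) + Real.sin τ * θ
        = Real.sqrt ((k : ℝ) + 2) * θ := by
      rw [hc, hs]
      field_simp
      linear_combination θ * ha2 - θ * hb2
    have mean2 : -Real.sin τ * (Real.sqrt ((k : ℝ) + 1) * θ) + Real.cos τ * θ = 0 := by
      rw [hc, hs]
      ring
    have hcast : ((k : ℝ) + 1) + 1 = (k : ℝ) + 2 := by ring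
    by_cases h1 : i = j₀
    · rw [if_pos h1, mean1]
      have hi0 : (i : ℕ) = 0 := by rw [h1]
      rw [hi0, if_pos rfl]
      congr 2 <;> (push_cast; ring)
    · rw [if_neg h1]
      by_cases h2 : i = k₁
      · rw [if_pos h2, mean2]
        have hik : (i : ℕ) = k + 1 := by rw [h2]
        rw [hik, if_neg (by omega : ¬(k + 1 = 0)), if_pos (by omega : k + 1 ≤ k + 1)]
      · rw [if_neg h2]
        show gaussianReal (if (i : ℕ) = 0 then Real.sqrt ((k : ℝ) + 1) * θ
            else if (i : ℕ) ≤ k then 0 else θ) v'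
          = gaussianReal (if (i : ℕ) = 0 then Real.sqrt (((k + 1 : ℕ) : ℝ) + 1) * θ
            else if (i : ℕ) ≤ k + 1 then 0 else θ) v'
        have hi0 : (i : ℕ) ≠ 0 := fun h => h1 (Fin.ext h)
        have hik : (i : ℕ) ≠ k + 1 := fun h => h2 (Fin.ext h)
        rw [if_neg hi0, if_neg hi0]
        have hiff : ((i : ℕ) ≤ k) ↔ ((i : ℕ) ≤ k + 1) := by omega
        by_cases h3 : (i : ℕ) ≤ k
        · rw [if_pos h3, if_pos (hiff.mp h3)]
        · rw [if_neg h3, if_neg (fun h => h3 (hiff.mpr h))]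

end Stmt3

open Stmt3

/-- applying `G₁` to `n` i.i.d. `N(θ, ν/2)` amplitudes yields independent
amplitudes, the first distributed `N(√n θ, ν/2)` and the others `N(0, ν/2)`. -/
theorem statement3
    {Ω : Type} [MeasureSpace Ω] [IsProbabilityMeasure (ℙ : Measure Ω)]
    (n : ℕ) (hn : 2 ≤ n) (θ ν : ℝ) (hν : 0 < ν)
    (A : ℕ → Ω → ℝ) (hAmeas : ∀ i, Measurable (A i))
    (hindep : iIndepFun (fun i : Fin n => A i) ℙ)
    (hlaw : ∀ i < n, (ℙ : Measure Ω).map (A i) = gaussianReal θ (Real.toNNReal (ν / 2))) :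
    iIndepFun
      (fun (i : Fin n) (ω : Ω) => G1 n (fun j => A j ω) i) ℙ
    ∧ (ℙ : Measure Ω).map (fun ω => G1 n (fun j => A j ω) 0)
        = gaussianReal (Real.sqrt n * θ) (Real.toNNReal (ν / 2))
    ∧ ∀ i, 1 ≤ i → i < n →
        (ℙ : Measure Ω).map (fun ω => G1 n (fun j => A j ω) i)
          = gaussianReal 0 (Real.toNNReal (ν / 2)) := by
  classical
  set v' : ℝ≥0 := Real.toNNReal (ν / 2) with hv'def
  have hv' : v' ≠ 0 := by
    simp only [hv'def, ne_eq, Real.toNNReal_eq_zero, not_le]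
    linarith
  set X : Fin n → Ω → ℝ := fun i ω => G1 n (fun j => A j ω) i with hX
  have hG1eq : ∀ v : ℕ → ℝ, ∀ i : ℕ, G1 n v i = G1p (n - 1) v i := fun _ _ => rfl
  -- the joint law of the A's
  have hjointA : (ℙ : Measure Ω).map (fun ω (i : Fin n) => A i ω)
      = Measure.pi (fun _ : Fin n => gaussianReal θ v') := by
    rw [(iIndepFun_iff_pi_map (fun i : Fin n => A i) (fun i => hAmeas i)).mp hindep]
    congr 1
    funext i
    exact hlaw i i.isLt
  have hAjointmeas : Measurable (fun ω (i : Fin n) => A i ω) :=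
    measurable_pi_lambda _ fun i => hAmeas i
  -- express X through the Fin n transformation
  set F : (Fin n → ℝ) → (Fin n → ℝ) := fun v i => G1p (n - 1) (extendFin n v) i with hF
  have hFmeas : Measurable F :=
    measurable_pi_lambda _ fun i => G1p_extend_measurable (n - 1) i
  have hXF : (fun ω (i : Fin n) => X i ω) = F ∘ (fun ω i => A i ω) := by
    funext ω i
    show G1 n (fun j => A j ω) ↑i = G1p (n - 1) (extendFin n (fun i : Fin n => A ↑i ω)) ↑i
    rw [hG1eq]
    refine G1p_local (n - 1) (by omega) _ _ (fun j hj => ?_) ↑i i.isLt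
    simp [extendFin, hj]
  -- joint law of the X's
  have hjointX : (ℙ : Measure Ω).map (fun ω (i : Fin n) => X i ω)
      = Measure.pi (fun i : Fin n =>
          gaussianReal (if (i : ℕ) = 0 then Real.sqrt (((n - 1 : ℕ) : ℝ) + 1) * θ
            else if (i : ℕ) ≤ n - 1 then 0 else θ) v') := by
    rw [hXF, ← Measure.map_map hFmeas hAjointmeas, hjointA]
    exact main_pi n hn θ v' hv' (n - 1) le_rfl
  have hXjointmeas : Measurable (fun ω (i : Fin n) => X i ω) := by
    rw [hXF]; exact hFmeas.comp hAjointmeas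
  have hXmeas : ∀ i : Fin n, Measurable (X i) := fun i =>
    (measurable_pi_apply i).comp hXjointmeas
  have hmarg : ∀ i : Fin n, (ℙ : Measure Ω).map (X i)
      = gaussianReal (if (i : ℕ) = 0 then Real.sqrt (((n - 1 : ℕ) : ℝ) + 1) * θ
          else if (i : ℕ) ≤ n - 1 then 0 else θ) v' := by
    intro i
    have heq : X i = (fun v : Fin n → ℝ => v i) ∘ (fun ω (j : Fin n) => X j ω) := rfl
    rw [heq, ← Measure.map_map (measurable_pi_apply i) hXjointmeas, hjointX, map_eval_pi]
  have hcast : ((n - 1 : ℕ) : ℝ) + 1 = (n : ℝ) := by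
    have h : (n - 1) + 1 = n := by omega
    exact_mod_cast congrArg (fun m : ℕ => (m : ℝ)) h
  refine ⟨?_, ?_, ?_⟩
  · exact (iIndepFun_iff_pi_map X hXmeas).mpr (by
      rw [hjointX]
      congr 1
      funext i
      exact (hmarg i).symm)
  · have h0n : 0 < n := by omega
    have hthis := hmarg ⟨0, h0n⟩
    simp only [show ((⟨0, h0n⟩ : Fin n) : ℕ) = 0 from rfl, if_pos] at hthis
    rw [hcast] at hthis
    exact hthis
  · intro i h1i hin
    have hthis := hmarg ⟨i, hin⟩
    simp only [show ((⟨i, hin⟩ : Fin n) : ℕ) = i from rfl] at hthis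
    rw [if_neg (by omega), if_pos (by omega)] at hthis
    exact hthis
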